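/- Let G be a connected graph and h a graph automorphism of G. Define the displacement function d_h(x) = d(x, h(x)) and the translation length |h| = min over vertices x of d_h(x). Let v be a vertex attaining the minimum, let α = (v = a_0, a_1, ..., a_{|h|} = h(v)) be a geodesic from v to h(v), and let γ : ℤ → V(G) be the bi-infinite path obtained by concatenating the paths h^n(α) for n ∈ ℤ. Then for all integers a, b with |a - b| ≤ |h|, we have d(γ(a), γ(b)) = |a - b|; that is, γ is an |h|-local geodesic. -/

import Mathlib

private lemma iso_dist_le {V : Type*} {G : SimpleGraph V} (hconn : G.Connected)
    (h : G ≃g G) (x y : V) : G.dist (h x) (h y) ≤ G.dist x y := by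
  obtain ⟨p, hp⟩ := (hconn x y).exists_walk_length_eq_dist
  calc G.dist (h x) (h y) ≤ (p.map h.toHom).length := SimpleGraph.dist_le _
    _ = p.length := p.length_map _
    _ = G.dist x y := hp

private lemma iso_dist_eq {V : Type*} {G : SimpleGraph V} (hconn : G.Connected)
    (h : G ≃g G) (x y : V) : G.dist (h x) (h y) = G.dist x y := by
  refine le_antisymm (iso_dist_le hconn h x y) ?_
  have := iso_dist_le hconn h.symm (h x) (h y)
  simpa using this

/-- the concatenation of h-translates of a geodesic from a
minimal-displacement vertex `v` to `h v` is an `|h|`-local geodesic. -/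
theorem stmt0 {V : Type*} (G : SimpleGraph V) (hconn : G.Connected)
    (h : G ≃g G) (m : ℕ) (hmpos : 0 < m)
    (hmin : ∀ x : V, m ≤ G.dist x (h x))
    (v : V) (hv : G.dist v (h v) = m)
    (α : ℕ → V) (hα0 : α 0 = v) (hαm : α m = h v)
    (hgeo : ∀ i j : ℕ, i ≤ j → j ≤ m → G.dist (α i) (α j) = j - i)
    (γ : ℤ → V)
    (hγ : ∀ (n : ℤ) (i : ℕ), i ≤ m →
      γ (n * (m : ℤ) + (i : ℤ)) = (h.toEquiv ^ n) (α i)) :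
    ∀ a b : ℤ, (a - b).natAbs ≤ m → G.dist (γ a) (γ b) = (a - b).natAbs := by
  -- distances are preserved by all integer powers of h
  have hd : ∀ (n : ℤ) (x y : V),
      G.dist ((h.toEquiv ^ n) x) ((h.toEquiv ^ n) y) = G.dist x y := by
    have hinv : ∀ x y : V, G.dist (h.toEquiv⁻¹ x) (h.toEquiv⁻¹ y) = G.dist x y := by
      intro x y
      have := iso_dist_eq hconn h (h.symm x) (h.symm y)
      rw [h.apply_symm_apply, h.apply_symm_apply] at this
      exact this.symm
    intro n
    induction n using Int.induction_on with
    | zero => simp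
    | succ k ih =>
      intro x y
      have : h.toEquiv ^ ((k : ℤ) + 1) = h.toEquiv ^ (k : ℤ) * h.toEquiv := by
        rw [zpow_add_one]
      rw [this]
      simp only [Equiv.Perm.mul_apply]
      rw [ih]
      exact iso_dist_eq hconn h x y
    | pred k ih =>
      intro x y
      have : h.toEquiv ^ (-(k : ℤ) - 1) = h.toEquiv ^ (-(k : ℤ)) * h.toEquiv⁻¹ := by
        rw [zpow_sub_one]
      rw [this]
      simp only [Equiv.Perm.mul_apply]
      rw [ih]
      exact hinv x y
  -- key cross-block distance
  have hcross : ∀ i j : ℕ, i ≤ m → j ≤ i →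
      G.dist (α i) (h (α j)) = m - i + j := by
    intro i j him hji
    have h1 : G.dist (α i) (h (α j)) ≤ G.dist (α i) (α m) + G.dist (α m) (h (α j)) :=
      hconn.dist_triangle
    have h2 : G.dist (α i) (α m) = m - i := hgeo i m him le_rfl
    have h3 : G.dist (α m) (h (α j)) = j := by
      rw [hαm]
      have := iso_dist_eq hconn h v (α j)
      rw [this, ← hα0]
      simpa using hgeo 0 j (Nat.zero_le _) (le_trans hji him)
    have h4 : (m : ℕ) ≤ G.dist (α i) (h (α i)) := hmin (α i)
    have h5 : G.dist (α i) (h (α i)) ≤ G.dist (α i) (h (α j)) + G.dist (h (α j)) (h (α i)) :=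
      hconn.dist_triangle
    have h6 : G.dist (h (α j)) (h (α i)) = i - j := by
      rw [iso_dist_eq hconn h]
      exact hgeo j i hji him
    omega
  -- main argument, WLOG a ≤ b
  suffices key : ∀ a b : ℤ, a ≤ b → (b - a).natAbs ≤ m →
      G.dist (γ a) (γ b) = (b - a).natAbs by
    intro a b hab
    rcases le_total a b with hle | hle
    · rw [show (a - b).natAbs = (b - a).natAbs by omega]
      exact key a b hle (by omega)
    · rw [SimpleGraph.dist_comm]
      exact key b a hle hab
  intro a b hab hlen
  set n : ℤ := a / (m : ℤ) with hn
  have hm0 : (0 : ℤ) < (m : ℤ) := by exact_mod_cast hmpos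
  set i : ℕ := (a % (m : ℤ)).toNat with hi
  have hicast : (i : ℤ) = a % (m : ℤ) := by
    rw [hi]; exact Int.toNat_of_nonneg (Int.emod_nonneg a (by omega))
  have ha : a = n * (m : ℤ) + (i : ℤ) := by
    rw [hicast, hn, mul_comm]
    exact (Int.mul_ediv_add_emod a (m : ℤ)).symm
  have him : i < m := by
    have := Int.emod_lt_of_pos a hm0
    omega
  have hγa : γ a = (h.toEquiv ^ n) (α i) := by
    rw [ha]; exact hγ n i him.le
  rcases le_or_gt b (n * (m : ℤ) + (m : ℤ)) with hb | hb
  · -- same block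
    set j : ℕ := (b - n * (m : ℤ)).toNat with hj
    have hjcast : (j : ℤ) = b - n * (m : ℤ) := by
      rw [hj]; refine Int.toNat_of_nonneg ?_
      omega
    have hjm : j ≤ m := by omega
    have hij : i ≤ j := by omega
    have hγb : γ b = (h.toEquiv ^ n) (α j) := by
      have : b = n * (m : ℤ) + (j : ℤ) := by omega
      rw [this]; exact hγ n j hjm
    rw [hγa, hγb, hd, hgeo i j hij hjm]
    have : b - a = (j : ℤ) - (i : ℤ) := by omega
    omega
  · -- next block
    set j : ℕ := (b - (n + 1) * (m : ℤ)).toNat with hj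
    have hba : b - a ≤ (m : ℤ) := by
      have : (b - a).natAbs = b - a := by omega
      omega
    have hjcast : (j : ℤ) = b - (n + 1) * (m : ℤ) := by
      rw [hj]; refine Int.toNat_of_nonneg ?_
      have : (n + 1) * (m : ℤ) = n * (m : ℤ) + (m : ℤ) := by ring
      omega
    have hji : j ≤ i := by
      have h1 : (n + 1) * (m : ℤ) = n * (m : ℤ) + (m : ℤ) := by ring
      omega
    have hγb : γ b = (h.toEquiv ^ (n + 1)) (α j) := by
      have : b = (n + 1) * (m : ℤ) + (j : ℤ) := by omega
      rw [this]; exact hγ (n + 1) j (le_trans hji him.le)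
    have hpow : (h.toEquiv ^ (n + 1)) (α j) = (h.toEquiv ^ n) (h (α j)) := by
      rw [zpow_add_one]
      rfl
    rw [hγa, hγb, hpow, hd, hcross i j him.le hji]
    have : b - a = (m : ℤ) + (j : ℤ) - (i : ℤ) := by
      have h1 : (n + 1) * (m : ℤ) = n * (m : ℤ) + (m : ℤ) := by ring
      omega
    omega
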